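/- Consider the greedy algorithm that, starting from an empty set, repeatedly adds a path surviving the maximum number of not-yet-survived fibers. If every path uses at most K fibers, the greedy algorithm terminates with a survivable path set of size at most OPT·(1 + log K), where OPT is the minimum size of a survivable path set. -/
import Mathlib


/-- Greedy algorithm: starting from all fibers `F` unsurvived (`U 0 = F`), at each step
the greedy algorithm picks a path `g i ∈ Fam` surviving the maximum number of currently
unsurvived fibers; the unsurvived set is updated to the unsurvived fibers used by `g i`.
If every path uses at most `K ≥ 1` fibers and a survivable path set of minimum size `OPT`
exists, then greedy terminates within `OPT * (1 + log K)` steps with all fibers survived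
(the selected paths then form a survivable set of that size). -/
theorem stmt_1 {α : Type*} [DecidableEq α] (F : Finset α) (Fam : Finset (Finset α))
    (K OPT : ℕ) (hK1 : 1 ≤ K)
    (hK : ∀ P ∈ Fam, P.card ≤ K)
    (hOPT : ∃ S ⊆ Fam, (∀ f ∈ F, ∃ P ∈ S, f ∉ P) ∧ S.card = OPT)
    (hOPTmin : ∀ S ⊆ Fam, (∀ f ∈ F, ∃ P ∈ S, f ∉ P) → OPT ≤ S.card)
    (U : ℕ → Finset α) (g : ℕ → Finset α)
    (hU0 : U 0 = F)
    (hg : ∀ i, U i ≠ ∅ → g i ∈ Fam)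
    (hUsucc : ∀ i, U (i + 1) = (U i).filter (fun f => f ∈ g i))
    (hgreedy : ∀ i, U i ≠ ∅ → ∀ P ∈ Fam,
      ((U i).filter (fun f => f ∉ P)).card ≤ ((U i).filter (fun f => f ∉ g i)).card) :
    ∃ t : ℕ, U t = ∅ ∧ (t : ℝ) ≤ (OPT : ℝ) * (1 + Real.log K) := by
  obtain ⟨S, hSFam, hScov, hScard⟩ := hOPT
  have hlogK : 0 ≤ Real.log K := Real.log_nonneg (by exact_mod_cast hK1)
  -- every unsurvived set is a subset of F
  have hUF : ∀ i, U i ⊆ F := by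
    intro i
    induction i with
    | zero => simp [hU0]
    | succ n ih => rw [hUsucc n]; exact (Finset.filter_subset _ _).trans ih
  -- card decomposition at each step
  have hsplit : ∀ i, (U (i+1)).card + ((U i).filter (fun f => f ∉ g i)).card = (U i).card := by
    intro i
    rw [hUsucc i]
    exact Finset.card_filter_add_card_filter_not (fun f => f ∈ g i)
  -- key greedy step: OPT * removed ≥ |U i|
  have hstep : ∀ i, U i ≠ ∅ → (U i).card ≤ OPT * ((U i).filter (fun f => f ∉ g i)).card := by
    intro i hne
    have hsum : (U i).card ≤ ∑ P ∈ S, ((U i).filter (fun f => f ∉ P)).card := by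
      calc (U i).card = ∑ f ∈ U i, 1 := by simp
        _ ≤ ∑ f ∈ U i, (S.filter (fun P => f ∉ P)).card := by
            apply Finset.sum_le_sum
            intro f hf
            obtain ⟨P, hP, hfP⟩ := hScov f (hUF i hf)
            exact Finset.card_pos.mpr ⟨P, Finset.mem_filter.mpr ⟨hP, hfP⟩⟩
        _ = ∑ P ∈ S, ((U i).filter (fun f => f ∉ P)).card := by
            simp only [Finset.card_filter]
            exact Finset.sum_comm
    calc (U i).card ≤ ∑ P ∈ S, ((U i).filter (fun f => f ∉ P)).card := hsum
      _ ≤ ∑ _P ∈ S, ((U i).filter (fun f => f ∉ g i)).card := by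
          apply Finset.sum_le_sum
          intro P hP
          exact hgreedy i hne P (hSFam hP)
      _ = OPT * ((U i).filter (fun f => f ∉ g i)).card := by
          rw [Finset.sum_const, hScard, smul_eq_mul]
  -- strict decrease while nonempty
  have hdec : ∀ i, U i ≠ ∅ → (U (i+1)).card < (U i).card := by
    intro i hne
    have h1 : 0 < (U i).card := Finset.card_pos.mpr (Finset.nonempty_iff_ne_empty.mpr hne)
    have h2 := hstep i hne
    have h3 := hsplit i
    have hr : 0 < ((U i).filter (fun f => f ∉ g i)).card := by
      rcases Nat.eq_zero_or_pos ((U i).filter (fun f => f ∉ g i)).card with h | h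
      · rw [h, Nat.mul_zero] at h2; omega
      · exact h
    omega
  -- termination
  have hterm : ∃ t, U t = ∅ := by
    have key : ∀ n i, (U i).card ≤ n → ∃ t, U t = ∅ := by
      intro n
      induction n with
      | zero => intro i hi; exact ⟨i, Finset.card_eq_zero.mp (Nat.le_zero.mp hi)⟩
      | succ n ih =>
          intro i hi
          by_cases h : U i = ∅
          · exact ⟨i, h⟩
          · exact ih (i+1) (by have := hdec i h; omega)
    exact key (U 0).card 0 le_rfl
  by_cases h0 : U 0 = ∅
  · refine ⟨0, h0, ?_⟩
    simp only [Nat.cast_zero]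
    exact mul_nonneg (Nat.cast_nonneg _) (by linarith)
  -- F nonempty, hence OPT ≥ 1
  have hOPT1 : 1 ≤ OPT := by
    obtain ⟨f, hf⟩ := Finset.nonempty_iff_ne_empty.mpr h0
    obtain ⟨P, hP, -⟩ := hScov f (hUF 0 hf)
    rw [← hScard]
    exact Finset.card_pos.mpr ⟨P, hP⟩
  by_cases h1 : U 1 = ∅
  · refine ⟨1, h1, ?_⟩
    have hO : (1:ℝ) ≤ OPT := by exact_mod_cast hOPT1
    push_cast
    nlinarith [mul_nonneg (by linarith : (0:ℝ) ≤ (OPT:ℝ)) hlogK]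
  -- real-valued step inequality
  have hrstep : ∀ i, U i ≠ ∅ →
      (OPT:ℝ) * (U (i+1)).card ≤ ((OPT:ℝ) - 1) * (U i).card := by
    intro i hne
    have h2 := hstep i hne
    have h3 := hsplit i
    have h2' : ((U i).card : ℝ) ≤ OPT * ((U i).filter (fun f => f ∉ g i)).card := by
      exact_mod_cast h2
    have h3' : ((U (i+1)).card : ℝ) + ((U i).filter (fun f => f ∉ g i)).card
        = (U i).card := by exact_mod_cast h3
    nlinarith
  -- OPT ≥ 2 since U 1 ≠ ∅
  have hOPT2 : 2 ≤ OPT := by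
    rcases Nat.lt_or_ge OPT 2 with h | h
    · exfalso
      have hOPTe : OPT = 1 := by omega
      have := hrstep 0 h0
      rw [hOPTe] at this
      have h1' : 0 < (U 1).card :=
        Finset.card_pos.mpr (Finset.nonempty_iff_ne_empty.mpr h1)
      have h1'' : (1:ℝ) ≤ (U 1).card := by exact_mod_cast h1'
      push_cast at this
      nlinarith
    · exact h
  have hOPTpos : (0:ℝ) < OPT := by positivity
  -- decay: |U (1+j)| ≤ K * exp(-j/OPT)
  have hdecay : ∀ j, ((U (1+j)).card : ℝ) ≤ K * Real.exp (-(j:ℝ)/OPT) := by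
    intro j
    induction j with
    | zero =>
        simp only [Nat.cast_zero, neg_zero, zero_div, Real.exp_zero, mul_one]
        have hsub : U 1 ⊆ g 0 := by
          rw [hUsucc 0]
          intro f hf
          exact (Finset.mem_filter.mp hf).2
        have := (Finset.card_le_card hsub).trans (hK (g 0) (hg 0 h0))
        exact_mod_cast this
    | succ j ih =>
        have hexp : Real.exp (-(↑(j+1):ℝ)/OPT)
            = Real.exp (-(j:ℝ)/OPT) * Real.exp (-1/OPT) := by
          rw [← Real.exp_add]
          congr 1
          push_cast
          ring
        by_cases h : U (1+j) = ∅
        · have : U (1+j+1) = ∅ := by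
            rw [hUsucc (1+j), h]
            simp
          rw [show 1+(j+1) = 1+j+1 by ring, this]
          simp only [Finset.card_empty, Nat.cast_zero]
          positivity
        · have hs := hrstep (1+j) h
          have hcast : (0:ℝ) ≤ (OPT:ℝ) - 1 := by
            have : (1:ℝ) ≤ OPT := by exact_mod_cast hOPT1
            linarith
          have h4 : ((OPT:ℝ) - 1) * (U (1+j)).card
              ≤ ((OPT:ℝ) - 1) * (K * Real.exp (-(j:ℝ)/OPT)) :=
            mul_le_mul_of_nonneg_left ih hcast
          have h5 : (OPT:ℝ) - 1 ≤ OPT * Real.exp (-1/OPT) := by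
            have h := Real.add_one_le_exp (-1/(OPT:ℝ))
            have h' := mul_le_mul_of_nonneg_left h hOPTpos.le
            have heq : (OPT:ℝ) * (-1/OPT + 1) = (OPT:ℝ) - 1 := by
              field_simp
              ring
            linarith
          have h6 : ((OPT:ℝ) - 1) * (K * Real.exp (-(j:ℝ)/OPT))
              ≤ (OPT * Real.exp (-1/OPT)) * (K * Real.exp (-(j:ℝ)/OPT)) := by
            apply mul_le_mul_of_nonneg_right h5
            positivity
          have h7 : (OPT:ℝ) * (U (1+j+1)).card
              ≤ OPT * (K * Real.exp (-(↑(j+1):ℝ)/OPT)) := by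
            rw [hexp]
            nlinarith
          rw [show 1+(j+1) = 1+j+1 by ring]
          exact le_of_mul_le_mul_left h7 hOPTpos
  -- minimal emptiness time
  set t0 := Nat.find hterm with ht0def
  have ht0 : U t0 = ∅ := Nat.find_spec hterm
  have hmin : ∀ s, s < t0 → U s ≠ ∅ := fun s hs => Nat.find_min hterm hs
  have ht02 : 2 ≤ t0 := by
    by_contra h
    push_neg at h
    interval_cases t0
    · exact h0 ht0
    · exact h1 ht0
  set j := t0 - 2 with hjdef
  have hj1 : 1 + j = t0 - 1 := by omega
  have hne1j : U (1 + j) ≠ ∅ := by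
    rw [hj1]
    exact hmin (t0 - 1) (by omega)
  have hcard1 : (1:ℝ) ≤ (U (1+j)).card := by
    have : 0 < (U (1+j)).card :=
      Finset.card_pos.mpr (Finset.nonempty_iff_ne_empty.mpr hne1j)
    exact_mod_cast this
  have hKe : (1:ℝ) ≤ K * Real.exp (-(j:ℝ)/OPT) := hcard1.trans (hdecay j)
  have hexpK : Real.exp ((j:ℝ)/OPT) ≤ K := by
    have hep : (0:ℝ) < Real.exp (-(j:ℝ)/OPT) := Real.exp_pos _
    have : Real.exp ((j:ℝ)/OPT) * 1 ≤ Real.exp ((j:ℝ)/OPT) * (K * Real.exp (-(j:ℝ)/OPT)) :=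
      mul_le_mul_of_nonneg_left hKe (le_of_lt (Real.exp_pos _))
    rw [mul_one] at this
    calc Real.exp ((j:ℝ)/OPT) ≤ Real.exp ((j:ℝ)/OPT) * (K * Real.exp (-(j:ℝ)/OPT)) := this
      _ = K * (Real.exp ((j:ℝ)/OPT) * Real.exp (-(j:ℝ)/OPT)) := by ring
      _ = K := by
          rw [← Real.exp_add, show (j:ℝ)/OPT + -(j:ℝ)/OPT = 0 by ring,
            Real.exp_zero, mul_one]
  have hjlog : (j:ℝ)/OPT ≤ Real.log K := by
    rw [Real.le_log_iff_exp_le (by exact_mod_cast Nat.lt_of_lt_of_le Nat.zero_lt_one hK1)]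
    exact hexpK
  have hjbound : (j:ℝ) ≤ OPT * Real.log K := by
    rw [div_le_iff₀ hOPTpos] at hjlog
    linarith [mul_comm (Real.log K) (OPT:ℝ)]
  refine ⟨t0, ht0, ?_⟩
  have ht0j : (t0:ℝ) = (j:ℝ) + 2 := by
    have : t0 = j + 2 := by omega
    rw [this]; push_cast; ring
  have hO2 : (2:ℝ) ≤ OPT := by exact_mod_cast hOPT2
  rw [ht0j]
  nlinarith
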